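/- For an integer n ≥ 2, define f : ℂ → ℂ by f(z) = zⁿ/z̄ for z ≠ 0 and f(0) = 0. Then: (1) for every disc D(a,r) = {z : |z−a| < r} whose closure contains 0 with |a| < r, the restriction of f to the circle {|z−a| = r} extends to a function holomorphic on D(a,r) and continuous on cl(D(a,r)) — explicitly, on the circle z̄ = ā + r²/(z−a), so f agrees there with the rational function zⁿ(z−a)/(r² + ā(z−a)), whose unique pole lies outside cl(D(a,r)) precisely when |a| < r; (2) f is not holomorphic on any nonempty open subset of ℂ ∖ {0}, since ∂̄f = −zⁿ/z̄² ≠ 0. Hence the hypothesis ⋂_{t∈M} cl(D_t) = ∅ in the strip-problem theorem cannot be omitted: for any family of discs all of whose closures contain 0, f extends holomorphically into each disc from its boundary circle yet is not holomorphic. -/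

import Mathlib

/-!
STATEMENT 19: For an integer n ≥ 2, define f : ℂ → ℂ by f(z) = zⁿ/z̄ for z ≠ 0 and f(0) = 0.
-/

/-- The Wirtinger derivative `∂̄f = ½(∂ₓf + i ∂_yf)`, computed from the real Fréchet
derivative. -/
noncomputable def wirtingerDbar (f : ℂ → ℂ) (z : ℂ) : ℂ :=
  (fderiv ℝ f z 1 + Complex.I * fderiv ℝ f z Complex.I) / 2

lemma dbar_calc (n : ℕ) (f : ℂ → ℂ)
    (hf : ∀ z : ℂ, f z = z ^ n / (starRingEnd ℂ) z) (z : ℂ) (hz : z ≠ 0) :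
    wirtingerDbar f z = -(z ^ n) / ((starRingEnd ℂ) z) ^ 2 := by
  have hcz : (starRingEnd ℂ) z ≠ 0 := by simpa using hz
  have hpow := ((hasDerivAt_pow n z).hasFDerivAt).restrictScalars ℝ
  have hconj : HasFDerivAt (starRingEnd ℂ)
      (Complex.conjCLE.toContinuousLinearMap) z := Complex.conjCLE.hasFDerivAt
  have hinv := ((hasDerivAt_inv hcz).hasFDerivAt).restrictScalars ℝ
  have hcomp := hinv.comp z hconj
  have hmul := hpow.mul hcomp
  have hfun : f = fun w : ℂ => w ^ n * ((starRingEnd ℂ) w)⁻¹ := by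
    funext w; rw [hf, div_eq_mul_inv]
  simp only [Function.comp_def] at hmul
  rw [hfun]
  unfold wirtingerDbar
  rw [show (fun w : ℂ => w ^ n * ((starRingEnd ℂ) w)⁻¹) =
      ((fun x : ℂ => x ^ n) * fun x => ((starRingEnd ℂ) x)⁻¹) from rfl, hmul.fderiv]
  simp [ContinuousLinearMap.smulRight_apply, Complex.conjCLE_apply, Complex.conj_I,
    Function.comp, smul_eq_mul]
  field_simp
  ring_nf
  rw [Complex.I_sq]; ring

/-- On the circle of radius `r` around `a`, `conj (z - a) * (z - a) = r ^ 2`. -/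
lemma sphere_conj_mul {a : ℂ} {r : ℝ} {z : ℂ} (hzs : z ∈ Metric.sphere a r) :
    (starRingEnd ℂ) (z - a) * (z - a) = (r : ℂ) ^ 2 := by
  have h : ‖z - a‖ = r := by
    simpa [Complex.dist_eq] using hzs
  rw [mul_comm, Complex.mul_conj, Complex.normSq_eq_norm_sq, h]
  push_cast
  ring

theorem stmt_19 (n : ℕ) (hn : 2 ≤ n) (f : ℂ → ℂ)
    (hf : ∀ z : ℂ, f z = z ^ n / (starRingEnd ℂ) z) :
    -- (1) holomorphic extension from every circle enclosing the origin (|a| < r)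
    (∀ (a : ℂ) (r : ℝ), 0 < r → ‖a‖ < r →
      ∃ F : ℂ → ℂ, ContinuousOn F (Metric.closedBall a r) ∧
        DifferentiableOn ℂ F (Metric.ball a r) ∧
        ∀ z ∈ Metric.sphere a r, F z = f z) ∧
    -- the explicit identities on the circle |z − a| = r
    (∀ (a : ℂ) (r : ℝ), 0 < r → ∀ z ∈ Metric.sphere a r,
      (starRingEnd ℂ) z = (starRingEnd ℂ) a + (r : ℂ) ^ 2 / (z - a) ∧
      (z ≠ 0 → f z = z ^ n * (z - a) / ((r : ℂ) ^ 2 + (starRingEnd ℂ) a * (z - a)))) ∧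
    -- the unique pole a − r²/ā of that rational function lies outside cl(D(a,r)) iff |a| < r
    (∀ (a : ℂ) (r : ℝ), 0 < r → a ≠ 0 →
      (‖a‖ < r ↔ a - (r : ℂ) ^ 2 / (starRingEnd ℂ) a ∉ Metric.closedBall a r)) ∧
    -- (2) f is not holomorphic on any nonempty open subset of ℂ ∖ {0}
    (∀ U : Set ℂ, IsOpen U → U.Nonempty → (0 : ℂ) ∉ U → ¬ DifferentiableOn ℂ f U) ∧
    (∀ z : ℂ, z ≠ 0 →
      wirtingerDbar f z = -(z ^ n) / ((starRingEnd ℂ) z) ^ 2 ∧ wirtingerDbar f z ≠ 0) := by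
  -- Part E first (used in part D).
  have partE : ∀ z : ℂ, z ≠ 0 →
      wirtingerDbar f z = -(z ^ n) / ((starRingEnd ℂ) z) ^ 2 ∧ wirtingerDbar f z ≠ 0 := by
    intro z hz
    have hcz : (starRingEnd ℂ) z ≠ 0 := by simpa using hz
    have h := dbar_calc n f hf z hz
    refine ⟨h, ?_⟩
    rw [h]
    exact div_ne_zero (neg_ne_zero.2 (pow_ne_zero n hz)) (pow_ne_zero 2 hcz)
  refine ⟨?_, ?_, ?_, ?_, partE⟩
  · -- Part A
    intro a r hr har
    set d : ℂ → ℂ := fun z => (r : ℂ) ^ 2 + (starRingEnd ℂ) a * (z - a) with hd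
    have hdne : ∀ z ∈ Metric.closedBall a r, d z ≠ 0 := by
      intro z hzb hzero
      have h1 : (starRingEnd ℂ) a * (z - a) = -(r : ℂ) ^ 2 := by
        have := hzero; simp only [hd] at this; linear_combination this
      have h2 : ‖a‖ * ‖z - a‖ = r ^ 2 := by
        have := congrArg (‖·‖) h1
        simpa [norm_mul, norm_neg, Complex.norm_conj, Complex.norm_real,
          abs_of_pos hr] using this
      have h3 : ‖z - a‖ ≤ r := by
        simpa [Complex.dist_eq] using hzb
      have : r ^ 2 ≤ ‖a‖ * r := by
        rw [← h2]
        exact mul_le_mul_of_nonneg_left h3 (norm_nonneg a)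
      nlinarith [norm_nonneg a]
    refine ⟨fun z => z ^ n * (z - a) / d z, ?_, ?_, ?_⟩
    · exact ContinuousOn.div (by fun_prop) (by fun_prop) hdne
    · exact DifferentiableOn.div (by fun_prop) (by fun_prop)
        (fun z hz => hdne z (Metric.ball_subset_closedBall hz))
    · intro z hzs
      have hzb : z ∈ Metric.closedBall a r := Metric.sphere_subset_closedBall hzs
      have hza : z - a ≠ 0 := by
        intro h
        have : ‖z - a‖ = r := by simpa [Complex.dist_eq] using hzs
        rw [h] at this; simp at this; linarith
      rcases eq_or_ne z 0 with h0 | h0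
      · subst h0
        rw [hf]
        have hn0 : n ≠ 0 := by omega
        simp [zero_pow hn0]
      · have hcz : (starRingEnd ℂ) z ≠ 0 := by simpa using h0
        have key : (starRingEnd ℂ) z * (z - a) = d z := by
          have h1 : ((starRingEnd ℂ) z - (starRingEnd ℂ) a) * (z - a) = (r : ℂ) ^ 2 := by
            have := sphere_conj_mul hzs
            rw [map_sub] at this; exact this
          simp only [hd]; linear_combination h1
        have key' : (starRingEnd ℂ) z * (z - a) =
            (r : ℂ) ^ 2 + (starRingEnd ℂ) a * (z - a) := key
        show z ^ n * (z - a) / ((r : ℂ) ^ 2 + (starRingEnd ℂ) a * (z - a)) = f z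
        rw [hf, ← key']
        field_simp
  · -- Part B
    intro a r hr z hzs
    have hza : z - a ≠ 0 := by
      intro h
      have : ‖z - a‖ = r := by simpa [Complex.dist_eq] using hzs
      rw [h] at this; simp at this; linarith
    have h1 : ((starRingEnd ℂ) z - (starRingEnd ℂ) a) * (z - a) = (r : ℂ) ^ 2 := by
      have := sphere_conj_mul hzs
      rw [map_sub] at this; exact this
    constructor
    · field_simp
      linear_combination h1
    · intro h0
      have hcz : (starRingEnd ℂ) z ≠ 0 := by simpa using h0
      have key : (starRingEnd ℂ) z * (z - a) = (r : ℂ) ^ 2 + (starRingEnd ℂ) a * (z - a) := by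
        linear_combination h1
      rw [hf, ← key]
      field_simp
  · -- Part C
    intro a r hr ha
    have hca : (starRingEnd ℂ) a ≠ 0 := by simpa using ha
    have habs : ‖a - (r : ℂ) ^ 2 / (starRingEnd ℂ) a - a‖ =
        r ^ 2 / ‖a‖ := by
      simp [norm_div, Complex.norm_conj, Complex.norm_real, abs_of_pos hr]
    have hapos : 0 < ‖a‖ := norm_pos_iff.mpr ha
    rw [Metric.mem_closedBall, Complex.dist_eq, habs, not_le, lt_div_iff₀ hapos]
    constructor
    · intro h; nlinarith
    · intro h; nlinarith
  · -- Part D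
    intro U hU ⟨z, hzU⟩ h0U hdiff
    have hz : z ≠ 0 := fun h => h0U (h ▸ hzU)
    have hda : DifferentiableAt ℂ f z := (hdiff z hzU).differentiableAt (hU.mem_nhds hzU)
    have hfr : fderiv ℝ f z = (fderiv ℂ f z).restrictScalars ℝ :=
      (hda.hasFDerivAt.restrictScalars ℝ).fderiv
    have hzero : wirtingerDbar f z = 0 := by
      unfold wirtingerDbar
      rw [hfr]
      simp only [ContinuousLinearMap.coe_restrictScalars']
      have : fderiv ℂ f z Complex.I = Complex.I * fderiv ℂ f z 1 := by
        have := (fderiv ℂ f z).map_smul Complex.I (1 : ℂ)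
        simpa [smul_eq_mul] using this
      rw [this]
      ring_nf
      rw [Complex.I_sq]; ring
    exact (partE z hz).2 hzero
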